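/- If two random variables M1 and M2 are conditionally independent given (T, Û), and a random variable U satisfies σ(U) ⊆ σ(Û), then it is not necessarily the case that M1 and M2 are conditionally independent given (T, U); however, if σ(Û) = σ(U, V) with V independent of (M1, M2, T, U), then conditional independence of M1 and M2 given (T, Û) implies conditional independence given (T, U). -/

import Mathlib

open MeasureTheory ProbabilityTheory

section AuxLemmas
open MeasurableSpace


lemma condexp_sup_indep_aux {Ω : Type} {mΩ : MeasurableSpace Ω} {μ : Measure Ω}
    [IsProbabilityMeasure μ] {m₁ m₂ mH : MeasurableSpace Ω}
    (h1 : m₁ ≤ mΩ) (h2 : m₂ ≤ mΩ) (hH : mH ≤ mΩ)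
    (hind : Indep (m₁ ⊔ m₂) mH μ)
    {f : Ω → ℝ} (hf : StronglyMeasurable[m₁] f) (hfint : Integrable f μ) :
    μ[f | m₂ ⊔ mH] =ᵐ[μ] μ[f | m₂] := by
  letI : MeasurableSpace Ω := mΩ
  have h12 : m₁ ⊔ m₂ ≤ mΩ := sup_le h1 h2
  have h2H : m₂ ⊔ mH ≤ mΩ := sup_le h2 hH
  -- key product formula
  have key : ∀ (h : Ω → ℝ), Integrable h μ → StronglyMeasurable[m₁ ⊔ m₂] h →
      ∀ A, MeasurableSet[m₂] A → ∀ B, MeasurableSet[mH] B →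
      ∫ x in A ∩ B, h x ∂μ = (∫ x in A, h x ∂μ) * (μ B).toReal := by
    intro h hint hmeas A hA B hB
    have hA12 : MeasurableSet[m₁ ⊔ m₂] A := (le_sup_right : m₂ ≤ m₁ ⊔ m₂) _ hA
    have hφ : StronglyMeasurable[m₁ ⊔ m₂] (A.indicator h) := hmeas.indicator hA12
    have hψ : StronglyMeasurable[mH] (B.indicator (fun _ => (1:ℝ))) :=
      stronglyMeasurable_const.indicator hB
    have hindep : IndepFun (A.indicator h) (B.indicator (fun _ => (1:ℝ))) μ := by
      rw [IndepFun_iff_Indep]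
      exact indep_of_indep_of_le_right
        (indep_of_indep_of_le_left hind hφ.measurable.comap_le) hψ.measurable.comap_le
    have hmul : (A.indicator h) * (B.indicator (fun _ => (1:ℝ))) = (A ∩ B).indicator h := by
      funext x
      by_cases hxA : x ∈ A <;> by_cases hxB : x ∈ B <;>
        simp [Set.indicator, hxA, hxB, Set.mem_inter_iff]
    have hABm : MeasurableSet[mΩ] ((A : Set Ω) ∩ B) := (h2 _ hA).inter (hH _ hB)
    have := hindep.integral_mul_eq_mul_integral
      ((hφ.mono h12).aestronglyMeasurable) ((hψ.mono hH).aestronglyMeasurable)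
    rw [hmul] at this
    rw [← integral_indicator (μ := μ) hABm, ← integral_indicator (μ := μ) (h2 _ hA)]
    have hB1 : integral μ (B.indicator (fun _ => (1:ℝ))) = (μ B).toReal :=
      integral_indicator_one (hH _ hB)
    rw [this, hB1]
  -- the set of sets where the integrals agree
  set g := μ[f|m₂] with hg
  have hgsm : StronglyMeasurable[m₂] g := stronglyMeasurable_condExp
  have hgint : Integrable g μ := integrable_condExp
  have hgeq : ∀ s : Set Ω, MeasurableSet[m₂ ⊔ mH] s →
      ∫ x in s, g x ∂μ = ∫ x in s, f x ∂μ := by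
    have hgen : m₂ ⊔ mH = MeasurableSpace.generateFrom
        {u | ∃ A B, MeasurableSet[m₂] A ∧ MeasurableSet[mH] B ∧ u = A ∩ B} := by
      apply le_antisymm
      · refine sup_le ?_ ?_ <;> intro u hu <;> apply measurableSet_generateFrom
        · exact ⟨u, Set.univ, hu, MeasurableSet.univ, (Set.inter_univ u).symm⟩
        · exact ⟨Set.univ, u, MeasurableSet.univ, hu, (Set.univ_inter u).symm⟩
      · refine MeasurableSpace.generateFrom_le ?_
        rintro u ⟨A, B, hA, hB, rfl⟩
        exact ((le_sup_left : m₂ ≤ m₂ ⊔ mH) _ hA).inter ((le_sup_right : mH ≤ m₂ ⊔ mH) _ hB)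
    have hpi : IsPiSystem {u : Set Ω | ∃ A B,
        MeasurableSet[m₂] A ∧ MeasurableSet[mH] B ∧ u = A ∩ B} := by
      rintro u ⟨A, B, hA, hB, rfl⟩ v ⟨A', B', hA', hB', rfl⟩ -
      exact ⟨A ∩ A', B ∩ B', hA.inter hA', hB.inter hB', by ext x; simp; tauto⟩
    intro s hs
    refine MeasurableSpace.induction_on_inter (m := m₂ ⊔ mH)
      (C := fun s _ => ∫ x in s, g x ∂μ = ∫ x in s, f x ∂μ) hgen hpi ?_ ?_ ?_ ?_ s hs
    · simp
    · rintro u ⟨A, B, hA, hB, rfl⟩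
      rw [key f hfint (hf.mono le_sup_left) A hA B hB,
        key g hgint (hgsm.mono le_sup_right) A hA B hB,
        setIntegral_condExp h2 hfint hA]
    · intro t ht hteq
      rw [setIntegral_compl (h2H _ ht) hfint, setIntegral_compl (h2H _ ht) hgint, hteq,
        integral_condExp h2]
    · intro F hdisj hFm hFeq
      rw [integral_iUnion (μ := μ) (fun i => h2H _ (hFm i)) hdisj hfint.integrableOn,
        integral_iUnion (μ := μ) (fun i => h2H _ (hFm i)) hdisj hgint.integrableOn]
      exact tsum_congr hFeq
  exact (ae_eq_condExp_of_forall_setIntegral_eq h2H hfint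
    (fun s _ _ => hgint.integrableOn) (fun s hs _ => hgeq s hs)
    ((hgsm.mono (le_sup_left : m₂ ≤ m₂ ⊔ mH)).aestronglyMeasurable)).symm

lemma comap_pair_eq_sup {Ω α β : Type*} [mα : MeasurableSpace α] [mβ : MeasurableSpace β]
    (f : Ω → α) (g : Ω → β) :
    MeasurableSpace.comap (fun ω => (f ω, g ω)) inferInstance
      = MeasurableSpace.comap f mα ⊔ MeasurableSpace.comap g mβ := by
  rw [show (inferInstance : MeasurableSpace (α × β))
      = MeasurableSpace.comap Prod.fst mα ⊔ MeasurableSpace.comap Prod.snd mβ from rfl,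
    MeasurableSpace.comap_sup, MeasurableSpace.comap_comp, MeasurableSpace.comap_comp]
  rfl

lemma part2 (Ω : Type) [mΩ : MeasurableSpace Ω] [StandardBorelSpace Ω] [Nonempty Ω]
    (μ : Measure Ω) [IsProbabilityMeasure μ]
    (M1 M2 T U V Uhat : Ω → ℝ)
    (hM1 : Measurable M1) (hM2 : Measurable M2) (hT : Measurable T) (hU : Measurable U)
    (hV : Measurable V) (hUhat : Measurable Uhat)
    (hUhatEq : MeasurableSpace.comap Uhat inferInstance
      = MeasurableSpace.comap (fun ω => (U ω, V ω)) inferInstance)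
    (hVind : IndepFun V (fun ω => (M1 ω, M2 ω, T ω, U ω)) μ)
    (h1 : MeasurableSpace.comap (fun ω => (T ω, Uhat ω)) inferInstance
        ≤ (inferInstance : MeasurableSpace Ω))
    (h2 : MeasurableSpace.comap (fun ω => (T ω, U ω)) inferInstance
        ≤ (inferInstance : MeasurableSpace Ω))
    (hCI : CondIndepFun (MeasurableSpace.comap (fun ω => (T ω, Uhat ω)) inferInstance) h1 M1 M2 μ) :
    CondIndepFun (MeasurableSpace.comap (fun ω => (T ω, U ω)) inferInstance) h2 M1 M2 μ := by
  letI : MeasurableSpace Ω := mΩ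
  rw [condIndepFun_iff_condExp_inter_preimage_eq_mul hM1 hM2] at hCI ⊢
  intro s t hs ht
  specialize hCI s t hs ht
  set m' := MeasurableSpace.comap (fun ω => (T ω, U ω)) inferInstance with hm'def
  set mhat := MeasurableSpace.comap (fun ω => (T ω, Uhat ω)) inferInstance with hmhatdef
  set mV := MeasurableSpace.comap V inferInstance with hmVdef
  have e1 : mhat = m' ⊔ mV := by
    rw [hmhatdef, hm'def, hmVdef, comap_pair_eq_sup, comap_pair_eq_sup, hUhatEq,
      comap_pair_eq_sup, sup_assoc]
  have hle : m' ≤ mhat := by rw [e1]; exact le_sup_left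
  rw [e1] at hCI
  letI : MeasurableSpace Ω := mΩ
  set A := M1 ⁻¹' s with hA
  set B := M2 ⁻¹' t with hB
  -- independence facts
  have hquad : MeasurableSpace.comap (fun ω => (M1 ω, M2 ω, T ω, U ω)) inferInstance
      = MeasurableSpace.comap M1 inferInstance ⊔ (MeasurableSpace.comap M2 inferInstance ⊔
        (MeasurableSpace.comap T inferInstance ⊔ MeasurableSpace.comap U inferInstance)) := by
    rw [comap_pair_eq_sup M1 (fun ω => (M2 ω, T ω, U ω)),
      comap_pair_eq_sup M2 (fun ω => (T ω, U ω)), comap_pair_eq_sup T U]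
  have hindep : Indep (MeasurableSpace.comap (fun ω => (M1 ω, M2 ω, T ω, U ω)) inferInstance)
      mV μ := ((IndepFun_iff_Indep _ _ _).1 hVind).symm
  have hindA : Indep (MeasurableSpace.comap M1 inferInstance ⊔ m') mV μ := by
    refine indep_of_indep_of_le_left hindep ?_
    rw [hquad, hm'def, comap_pair_eq_sup]
    refine sup_le le_sup_left (sup_le ?_ ?_)
    · exact le_trans le_sup_left (le_trans le_sup_right le_sup_right)
    · exact le_trans le_sup_right (le_trans le_sup_right le_sup_right)
  have hindB : Indep (MeasurableSpace.comap M2 inferInstance ⊔ m') mV μ := by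
    refine indep_of_indep_of_le_left hindep ?_
    rw [hquad, hm'def, comap_pair_eq_sup]
    refine sup_le (le_trans le_sup_left le_sup_right) (sup_le ?_ ?_)
    · exact le_trans le_sup_left (le_trans le_sup_right le_sup_right)
    · exact le_trans le_sup_right (le_trans le_sup_right le_sup_right)
  have hAm : MeasurableSet[mΩ] A := hM1 hs
  have hBm : MeasurableSet[mΩ] B := hM2 ht
  have hintA : Integrable (A.indicator (fun _ => (1:ℝ))) μ := (integrable_const 1).indicator hAm
  have hintB : Integrable (B.indicator (fun _ => (1:ℝ))) μ := (integrable_const 1).indicator hBm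
  have hsmA : StronglyMeasurable[MeasurableSpace.comap M1 inferInstance]
      (A.indicator (fun _ => (1:ℝ))) := stronglyMeasurable_const.indicator ⟨s, hs, rfl⟩
  have hsmB : StronglyMeasurable[MeasurableSpace.comap M2 inferInstance]
      (B.indicator (fun _ => (1:ℝ))) := stronglyMeasurable_const.indicator ⟨t, ht, rfl⟩
  have ea : μ[A.indicator (fun _ => (1:ℝ)) | m' ⊔ mV] =ᵐ[μ] μ[A.indicator (fun _ => (1:ℝ)) | m'] :=
    condexp_sup_indep_aux hM1.comap_le h2 hV.comap_le hindA hsmA hintA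
  have eb : μ[B.indicator (fun _ => (1:ℝ)) | m' ⊔ mV] =ᵐ[μ] μ[B.indicator (fun _ => (1:ℝ)) | m'] :=
    condexp_sup_indep_aux hM2.comap_le h2 hV.comap_le hindB hsmB hintB
  -- bounds for integrability of the product
  have hbdd : ∀ᵐ ω ∂μ, ‖(μ[A.indicator (fun _ => (1:ℝ)) | m']) ω‖ ≤ 1 := by
    have h0 : 0 ≤ᵐ[μ] μ[A.indicator (fun _ => (1:ℝ)) | m'] :=
      condExp_nonneg (Filter.Eventually.of_forall fun ω => Set.indicator_nonneg (by simp) ω)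
    have h1' : μ[A.indicator (fun _ => (1:ℝ)) | m'] ≤ᵐ[μ] μ[(fun _ => (1:ℝ)) | m'] :=
      condExp_mono hintA (integrable_const 1)
        (Filter.Eventually.of_forall fun ω => Set.indicator_le_self' (by simp) ω)
    rw [condExp_const h2 (1:ℝ)] at h1'
    filter_upwards [h0, h1'] with ω hω0 hω1
    rw [Real.norm_eq_abs, abs_le]
    exact ⟨le_trans (by norm_num) hω0, hω1⟩
  have hprod_int : Integrable (fun ω => (μ[A.indicator (fun _ => (1:ℝ)) | m']) ω *
      (μ[B.indicator (fun _ => (1:ℝ)) | m']) ω) μ :=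
    Integrable.bdd_mul integrable_condExp
      (stronglyMeasurable_condExp.mono h2).aestronglyMeasurable hbdd
  have hprod_sm : StronglyMeasurable[m'] (fun ω => (μ[A.indicator (fun _ => (1:ℝ)) | m']) ω *
      (μ[B.indicator (fun _ => (1:ℝ)) | m']) ω) :=
    stronglyMeasurable_condExp.mul stronglyMeasurable_condExp
  calc μ[(A ∩ B).indicator (fun _ => (1:ℝ)) | m']
      =ᵐ[μ] μ[μ[(A ∩ B).indicator (fun _ => (1:ℝ)) | m' ⊔ mV] | m'] := by
        refine (condExp_condExp_of_le ?_ (e1 ▸ h1)).symm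
        rw [← e1]; exact hle
    _ =ᵐ[μ] μ[fun ω => (μ[A.indicator (fun _ => (1:ℝ)) | m' ⊔ mV]) ω *
          (μ[B.indicator (fun _ => (1:ℝ)) | m' ⊔ mV]) ω | m'] := condExp_congr_ae hCI
    _ =ᵐ[μ] μ[fun ω => (μ[A.indicator (fun _ => (1:ℝ)) | m']) ω *
          (μ[B.indicator (fun _ => (1:ℝ)) | m']) ω | m'] := condExp_congr_ae (ea.mul eb)
    _ =ᵐ[μ] fun ω => (μ[A.indicator (fun _ => (1:ℝ)) | m']) ω *
          (μ[B.indicator (fun _ => (1:ℝ)) | m']) ω := by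
        rw [condExp_of_stronglyMeasurable h2 hprod_sm hprod_int]

end AuxLemmas


section Part1
noncomputable def cmu : Measure Bool :=
  (2:ENNReal)⁻¹ • Measure.dirac true + (2:ENNReal)⁻¹ • Measure.dirac false

instance : IsProbabilityMeasure cmu := by
  constructor
  simp [cmu, Measure.add_apply, Measure.smul_apply, ENNReal.inv_two_add_inv_two]

lemma cmu_true : cmu {true} = 2⁻¹ := by
  simp [cmu, Measure.add_apply, Measure.smul_apply, Measure.dirac_apply']

noncomputable def cM : Bool → ℝ := fun b => if b then 1 else 0

lemma cM_meas : Measurable cM := measurable_from_top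

lemma cM_pre : cM ⁻¹' {1} = {true} := by
  ext b; cases b <;> simp [cM]

-- M1,M2 measurable wrt m' ⇒ cond indep
lemma condIndep_of_measurable {Ω : Type} [mΩ : MeasurableSpace Ω] [StandardBorelSpace Ω]
    [Nonempty Ω] (μ : Measure Ω) [IsProbabilityMeasure μ] (f g : Ω → ℝ)
    (hf : Measurable f) (hg : Measurable g) (m' : MeasurableSpace Ω) (hm' : m' ≤ mΩ)
    (hfm : MeasurableSpace.comap f inferInstance ≤ m')
    (hgm : MeasurableSpace.comap g inferInstance ≤ m') :
    CondIndepFun m' hm' f g μ := by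
  letI : MeasurableSpace Ω := mΩ
  rw [condIndepFun_iff_condExp_inter_preimage_eq_mul hf hg]
  intro s t hs ht
  have hA : MeasurableSet[m'] (f ⁻¹' s) := hfm _ ⟨s, hs, rfl⟩
  have hB : MeasurableSet[m'] (g ⁻¹' t) := hgm _ ⟨t, ht, rfl⟩
  have hab : MeasurableSet[mΩ] (f ⁻¹' s ∩ g ⁻¹' t) := (hf hs).inter (hg ht)
  rw [condExp_of_stronglyMeasurable hm' (stronglyMeasurable_const.indicator (hA.inter hB))
      ((integrable_const 1).indicator hab),
    condExp_of_stronglyMeasurable hm' (stronglyMeasurable_const.indicator hA)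
      ((integrable_const 1).indicator (hf hs)),
    condExp_of_stronglyMeasurable hm' (stronglyMeasurable_const.indicator hB)
      ((integrable_const 1).indicator (hg ht))]
  refine Filter.Eventually.of_forall fun ω => ?_
  by_cases h1 : ω ∈ f ⁻¹' s <;> by_cases h2 : ω ∈ g ⁻¹' t <;>
    simp [Set.indicator, h1, h2]

lemma part1 : (¬ ∀ (Ω : Type) [MeasurableSpace Ω] [StandardBorelSpace Ω] [Nonempty Ω]
        (μ : Measure Ω) [IsProbabilityMeasure μ]
        (M1 M2 T U Uhat : Ω → ℝ),
        Measurable M1 → Measurable M2 → Measurable T → Measurable U → Measurable Uhat →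
        MeasurableSpace.comap U inferInstance ≤ MeasurableSpace.comap Uhat inferInstance →
        ∀ (h1 : MeasurableSpace.comap (fun ω => (T ω, Uhat ω)) inferInstance
              ≤ (inferInstance : MeasurableSpace Ω))
          (h2 : MeasurableSpace.comap (fun ω => (T ω, U ω)) inferInstance
              ≤ (inferInstance : MeasurableSpace Ω)),
        CondIndepFun (MeasurableSpace.comap (fun ω => (T ω, Uhat ω)) inferInstance) h1 M1 M2 μ →
        CondIndepFun (MeasurableSpace.comap (fun ω => (T ω, U ω)) inferInstance) h2 M1 M2 μ) := by
  intro h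
  have h1 : MeasurableSpace.comap (fun ω : Bool => ((0:ℝ), cM ω)) inferInstance
      ≤ (inferInstance : MeasurableSpace Bool) := le_top
  have h2 : MeasurableSpace.comap (fun ω : Bool => ((0:ℝ), (0:ℝ))) inferInstance
      ≤ (inferInstance : MeasurableSpace Bool) := le_top
  have hUle : MeasurableSpace.comap (fun _ : Bool => (0:ℝ)) inferInstance
      ≤ MeasurableSpace.comap cM inferInstance := by
    rw [MeasurableSpace.comap_const]; exact bot_le
  have hCI : CondIndepFun (MeasurableSpace.comap (fun ω : Bool => ((0:ℝ), cM ω)) inferInstance)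
      h1 cM cM cmu := by
    refine condIndep_of_measurable cmu cM cM cM_meas cM_meas _ h1 ?_ ?_ <;>
    · rintro A ⟨s, hs, rfl⟩
      refine ⟨Set.univ ×ˢ s, MeasurableSet.univ.prod hs, ?_⟩
      ext b; simp
  have hfinal := h Bool cmu cM cM (fun _ => 0) (fun _ => 0) cM cM_meas cM_meas
    measurable_const measurable_const cM_meas hUle h1 h2 hCI
  rw [condIndepFun_iff_condExp_inter_preimage_eq_mul cM_meas cM_meas] at hfinal
  have := hfinal {1} {1} (measurableSet_singleton 1) (measurableSet_singleton 1)
  rw [cM_pre, Set.inter_self] at this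
  rw [show MeasurableSpace.comap (fun ω : Bool => ((0:ℝ), (0:ℝ))) inferInstance = ⊥ from
    MeasurableSpace.comap_const _] at this
  rw [condExp_bot] at this
  have hne : (Filter.NeBot (ae cmu)) := ae_neBot.2 (IsProbabilityMeasure.ne_zero cmu)
  obtain ⟨ω, hω⟩ := this.exists
  have hint : ∫ x, ({true} : Set Bool).indicator (fun _ => (1:ℝ)) x ∂cmu
      = (cmu {true}).toReal := integral_indicator_one (by trivial)
  rw [hint] at hω
  rw [cmu_true] at hω
  norm_num at hω

end Part1

/-- If M1 ⟂ M2 | (T,Û) and σ(U) ⊆ σ(Û), conditional independence of M1, M2 given (T,U) does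
not follow in general; but it does follow when σ(Û) = σ(U,V) with V independent of
(M1, M2, T, U). -/
theorem condIndep_coarsening :
    (¬ ∀ (Ω : Type) [MeasurableSpace Ω] [StandardBorelSpace Ω] [Nonempty Ω]
        (μ : Measure Ω) [IsProbabilityMeasure μ]
        (M1 M2 T U Uhat : Ω → ℝ),
        Measurable M1 → Measurable M2 → Measurable T → Measurable U → Measurable Uhat →
        MeasurableSpace.comap U inferInstance ≤ MeasurableSpace.comap Uhat inferInstance →
        ∀ (h1 : MeasurableSpace.comap (fun ω => (T ω, Uhat ω)) inferInstance
              ≤ (inferInstance : MeasurableSpace Ω))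
          (h2 : MeasurableSpace.comap (fun ω => (T ω, U ω)) inferInstance
              ≤ (inferInstance : MeasurableSpace Ω)),
        CondIndepFun (MeasurableSpace.comap (fun ω => (T ω, Uhat ω)) inferInstance) h1 M1 M2 μ →
        CondIndepFun (MeasurableSpace.comap (fun ω => (T ω, U ω)) inferInstance) h2 M1 M2 μ)
    ∧
    (∀ (Ω : Type) [MeasurableSpace Ω] [StandardBorelSpace Ω] [Nonempty Ω]
        (μ : Measure Ω) [IsProbabilityMeasure μ]
        (M1 M2 T U V Uhat : Ω → ℝ),
        Measurable M1 → Measurable M2 → Measurable T → Measurable U → Measurable V →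
        Measurable Uhat →
        MeasurableSpace.comap Uhat inferInstance
          = MeasurableSpace.comap (fun ω => (U ω, V ω)) inferInstance →
        IndepFun V (fun ω => (M1 ω, M2 ω, T ω, U ω)) μ →
        ∀ (h1 : MeasurableSpace.comap (fun ω => (T ω, Uhat ω)) inferInstance
              ≤ (inferInstance : MeasurableSpace Ω))
          (h2 : MeasurableSpace.comap (fun ω => (T ω, U ω)) inferInstance
              ≤ (inferInstance : MeasurableSpace Ω)),
        CondIndepFun (MeasurableSpace.comap (fun ω => (T ω, Uhat ω)) inferInstance) h1 M1 M2 μ →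
        CondIndepFun (MeasurableSpace.comap (fun ω => (T ω, U ω)) inferInstance) h2 M1 M2 μ) :=
  ⟨part1, fun Ω _ _ _ μ _ M1 M2 T U V Uhat hM1 hM2 hT hU hV hUhat hUhatEq hVind h1 h2 hCI =>
    part2 Ω μ M1 M2 T U V Uhat hM1 hM2 hT hU hV hUhat hUhatEq hVind h1 h2 hCI⟩
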